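/- If X, N ∈ ℝ^{1+n} are both causal and future-directed (η(X,X) ≥ 0, X^0 > 0, η(N,N) ≥ 0, N^0 > 0), then the quadratic form γ(ξ,ξ) = −η(X,N) η(ξ,ξ) + 2 η(X,ξ) η(N,ξ) is positive semidefinite: γ(ξ,ξ) ≥ 0 for every ξ ∈ ℝ^{1+n}. -/
import Mathlib


noncomputable section

open MeasureTheory
open scoped BigOperators

/-- Flat spacetime `ℝ^{1+n}`, with coordinate `0` the time coordinate. -/
abbrev Spacetime (n : ℕ) := Fin (n + 1) → ℝ

/-- The diagonal of the Minkowski metric `η = diag(1, -1, …, -1)`. -/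
def mdiag {n : ℕ} (α : Fin (n + 1)) : ℝ := if α = 0 then 1 else -1

/-- The (inverse) Minkowski metric `η^{αβ}` (its matrix equals that of `η_{αβ}`). -/
def metricUp {n : ℕ} (α β : Fin (n + 1)) : ℝ := if α = β then mdiag α else 0

/-- The Minkowski bilinear form `η(u,v) = u⁰v⁰ - ∑ᵢ uⁱvⁱ`. -/
def minkBil {n : ℕ} (u v : Fin (n + 1) → ℝ) : ℝ := ∑ α, mdiag α * u α * v α

/-- Partial derivative `∂_α f` on flat spacetime. -/
def pd {n : ℕ} (α : Fin (n + 1)) (f : Spacetime n → ℝ) (x : Spacetime n) : ℝ :=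
  fderiv ℝ f x (Pi.single α 1)

/-- The stress tensor `T^{αβ}(φ) = ∂^αφ ∂^βφ - (1/2) η^{αβ}(∂^λφ ∂_λφ - 2V(φ))`
of a scalar field `φ` with potential `V`. -/
def Tphi {n : ℕ} (φ : Spacetime n → ℝ) (V : ℝ → ℝ) (α β : Fin (n + 1))
    (x : Spacetime n) : ℝ :=
  (mdiag α * pd α φ x) * (mdiag β * pd β φ x)
    - (1 / 2) * metricUp α β *
        ((∑ lam, mdiag lam * pd lam φ x * pd lam φ x) - 2 * V (φ x))

/-- The wave operator `□φ = η^{αβ} ∂_α ∂_β φ`. -/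
def box {n : ℕ} (φ : Spacetime n → ℝ) (x : Spacetime n) : ℝ :=
  ∑ α, mdiag α * pd α (pd α φ) x

lemma minkBil_eq {n : ℕ} (u v : Fin (n + 1) → ℝ) :
    minkBil u v = u 0 * v 0 - ∑ i : Fin n, u i.succ * v i.succ := by
  have h0 : mdiag (0 : Fin (n+1)) = 1 := if_pos rfl
  have hs : ∀ i : Fin n, mdiag (i.succ) = -1 := fun i => if_neg (Fin.succ_ne_zero i)
  rw [minkBil, Fin.sum_univ_succ, h0,
    Finset.sum_congr rfl (fun i _ => by rw [hs i]; ring : ∀ i ∈ Finset.univ,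
      mdiag (Fin.succ i) * u i.succ * v i.succ = -(u i.succ * v i.succ))]
  rw [Finset.sum_neg_distrib]
  ring

lemma sum_bilin {n : ℕ} (c d : ℝ) (y z : Fin n → ℝ) :
    ∑ i, (c * y i + d * z i) * (c * y i + d * z i)
      = c^2 * ∑ i, y i * y i + 2*c*d * ∑ i, y i * z i + d^2 * ∑ i, z i * z i := by
  rw [Finset.mul_sum, Finset.mul_sum, Finset.mul_sum, ← Finset.sum_add_distrib,
    ← Finset.sum_add_distrib]
  apply Finset.sum_congr rfl
  intros; ring

lemma sum_dot_lin {n : ℕ} (c d : ℝ) (x y z : Fin n → ℝ) :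
    ∑ i, x i * (c * y i + d * z i)
      = c * ∑ i, x i * y i + d * ∑ i, x i * z i := by
  rw [Finset.mul_sum, Finset.mul_sum, ← Finset.sum_add_distrib]
  apply Finset.sum_congr rfl
  intros; ring

lemma cs {n : ℕ} (y z : Fin n → ℝ) :
    (∑ i, y i * z i)^2 ≤ (∑ i, y i * y i) * (∑ i, z i * z i) := by
  have h := Finset.sum_mul_sq_le_sq_mul_sq Finset.univ y z
  simpa [sq] using h

lemma key_neg_le (s c : ℝ) (h1 : s^2 ≤ c^2) (h2 : 0 ≤ c) : -c ≤ s := by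
  nlinarith [sq_nonneg (s + c)]

set_option maxHeartbeats 1000000 in
/-- for `X, N` causal and future-directed, the quadratic form
`γ(ξ,ξ) = -η(X,N) η(ξ,ξ) + 2 η(X,ξ) η(N,ξ)` is positive semidefinite. -/
theorem quadratic_form_nonneg (n : ℕ) (hn : 1 ≤ n)
    (X N : Fin (n + 1) → ℝ)
    (hX : 0 ≤ minkBil X X) (hX0 : 0 < X 0)
    (hN : 0 ≤ minkBil N N) (hN0 : 0 < N 0) :
    ∀ ξ : Fin (n + 1) → ℝ,
      0 ≤ -(minkBil X N) * minkBil ξ ξ + 2 * minkBil X ξ * minkBil N ξ := by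
  intro ξ
  set a := X 0 with ha'
  set b := N 0 with hb'
  set t := ξ 0 with ht'
  set x : Fin n → ℝ := fun i => X i.succ with hx'
  set y : Fin n → ℝ := fun i => N i.succ with hy'
  set z : Fin n → ℝ := fun i => ξ i.succ with hz'
  rw [minkBil_eq X X] at hX
  rw [minkBil_eq N N] at hN
  rw [minkBil_eq X N, minkBil_eq ξ ξ, minkBil_eq X ξ, minkBil_eq N ξ]
  set A := ∑ i, x i * x i with hAd
  set B := ∑ i, y i * y i with hBd
  set C := ∑ i, z i * z i with hCd
  set P := ∑ i, x i * y i with hPd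
  set Q := ∑ i, x i * z i with hQd
  set R := ∑ i, y i * z i with hRd
  have hAa : A ≤ a^2 := by nlinarith
  have hBb : B ≤ b^2 := by nlinarith
  have hC0 : 0 ≤ C := Finset.sum_nonneg fun i _ => mul_self_nonneg _
  have hA0 : 0 ≤ A := Finset.sum_nonneg fun i _ => mul_self_nonneg _
  have hRsq : R^2 ≤ B * C := cs y z
  set β : ℝ := b*t^2 + b*C - 2*t*R with hβd
  have hβ0 : 0 ≤ β := by
    rw [hβd]
    nlinarith [sq_nonneg (b*t - R), mul_nonneg hC0 (sub_nonneg.2 hBb)]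
  set w : Fin n → ℝ := fun i => (t^2 - C) * y i + (-2*(b*t - R)) * z i with hwd
  have hSw : ∑ i, w i * w i
      = (t^2 - C)^2 * B + 2*(t^2 - C)*(-2*(b*t - R)) * R + (-2*(b*t - R))^2 * C :=
    sum_bilin _ _ y z
  have hSw0 : 0 ≤ ∑ i, w i * w i := Finset.sum_nonneg fun i _ => mul_self_nonneg _
  have hSwβ : ∑ i, w i * w i ≤ β^2 := by
    rw [hSw, hβd]
    nlinarith [sq_nonneg (b*t^2 - b*C), sq_nonneg (b*t^2 + b*C - 2*t*R),
      sq_nonneg (t^2 - C), mul_nonneg hC0 (sub_nonneg.2 hBb), sq_nonneg (b*t - R),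
      sq_nonneg t, sq_nonneg (t*R - b*C), sq_nonneg (b*t^2 - t*R)]
  have hxw2 : (∑ i, x i * w i)^2 ≤ A * (∑ i, w i * w i) := cs x w
  have h1 : (∑ i, x i * w i)^2 ≤ (a*β)^2 := by
    calc (∑ i, x i * w i)^2 ≤ A * (∑ i, w i * w i) := hxw2
      _ ≤ a^2 * β^2 := mul_le_mul hAa hSwβ hSw0 (sq_nonneg a)
      _ = (a*β)^2 := by ring
  have haβ : 0 ≤ a * β := mul_nonneg hX0.le hβ0
  have h2 : -(a*β) ≤ ∑ i, x i * w i := key_neg_le _ _ h1 haβ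
  have hxw : ∑ i, x i * w i = (t^2 - C) * P + (-2*(b*t - R)) * Q := by
    rw [hwd]
    exact sum_dot_lin _ _ x y z
  rw [hxw, hβd] at h2
  have hgoal : -(a*b - P)*(t*t - C) + 2*(a*t - Q)*(b*t - R)
      = a*(b*t^2 + b*C - 2*t*R) + ((t^2 - C)*P + (-2*(b*t - R))*Q) := by ring
  rw [hgoal]
  linarith [h2]
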